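/- Let (K,J) be a 2-site. For every weak equivalence w : x ⟶ y and every 1-arrow f : z ⟶ y, there exists an object p, a weak equivalence v : p ⟶ z, a 1-arrow g : p ⟶ x, and an invertible 2-cell g ≫ w ≅ v ≫ f (condition BF3 of Pronk holds for W_J). -/

import Mathlib

open CategoryTheory Bicategory

universe w v u

variable {B : Type u} [Bicategory.{w, v} B]

/-- Postcomposition with a 1-morphism, as a functor between hom-categories. -/
@[simps] def Postcomp {a b : B} (q : a ⟶ b) (z : B) : (z ⟶ a) ⥤ (z ⟶ b) where
  obj h := h ≫ q
  map α := α ▷ q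

/-- A 1-morphism is ff if all postcomposition functors are fully faithful. -/
def IsFF {a b : B} (q : a ⟶ b) : Prop :=
  ∀ z : B, (Postcomp q z).Full ∧ (Postcomp q z).Faithful

/-- Internal equivalence in a bicategory. -/
def IsIntEquiv {a b : B} (f : a ⟶ b) : Prop :=
  ∃ g : b ⟶ a, Nonempty (f ≫ g ≅ 𝟙 a) ∧ Nonempty (g ≫ f ≅ 𝟙 b)

/-- A fully faithful singleton coverage on a 2-category; a 2-site. -/
structure TwoSite (B : Type u) [Bicategory.{w, v} B] where
  J : ∀ ⦃a b : B⦄, (a ⟶ b) → Prop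
  id_mem : ∀ a : B, J (𝟙 a)
  comp_mem : ∀ ⦃a b c : B⦄ {f : a ⟶ b} {g : b ⟶ c}, J f → J g → J (f ≫ g)
  square : ∀ ⦃u x y : B⦄ (q : u ⟶ x), J q → ∀ f : y ⟶ x,
    ∃ (v : B) (k : v ⟶ y) (h : v ⟶ u), J k ∧ Nonempty (h ≫ q ≅ k ≫ f)
  ff : ∀ ⦃a b : B⦄ {q : a ⟶ b}, J q → IsFF q

/-- A 1-arrow is J-locally split. -/
def LocallySplit (S : TwoSite B) {x y : B} (f : x ⟶ y) : Prop :=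
  ∃ (u : B) (j : u ⟶ y), S.J j ∧ ∃ s : u ⟶ x, Nonempty (s ≫ f ≅ j)

/-- A weak equivalence: ff and J-locally split. -/
def WeakEquiv (S : TwoSite B) {x y : B} (f : x ⟶ y) : Prop :=
  IsFF f ∧ LocallySplit S f

/-- BF3 for the class of weak equivalences. -/
theorem weakEquiv_BF3 (S : TwoSite B) {x y z : B} (w : x ⟶ y) (f : z ⟶ y)
    (hw : WeakEquiv S w) :
    ∃ (p : B) (v : p ⟶ z) (g : p ⟶ x),
      WeakEquiv S v ∧ Nonempty (g ≫ w ≅ v ≫ f) := by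
  obtain ⟨hff, u, j, hJ, s, ⟨eps⟩⟩ := hw
  obtain ⟨p, k, h, hk, ⟨σ⟩⟩ := S.square j hJ f
  exact ⟨p, k, h ≫ s, ⟨S.ff hk, p, k, hk, 𝟙 p, ⟨λ_ k⟩⟩,
    ⟨α_ h s w ≪≫ whiskerLeftIso h eps ≪≫ σ⟩⟩
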